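/- (Linear programming reformulation, Theorem 3.) With the data and the linear robust problem (R'_K) as defined in the context, the optimal value of (R'_K) equals the optimal value of the linear program (R''_K): minimize c_K(𝐱^b,𝐱^r) + p*·z over (𝐱^b,𝐱^r) ∈ X_K, 𝐦 ∈ ℝ^K, z ∈ ℝ, λ⁺, λ⁻, θ⁺, θ⁻ ∈ ℝ₊^K and Λ⁺, Λ⁻, Θ⁺, Θ⁻ ∈ ℝ₊^{K×K}, subject to: x^r_k + x^b_k ≤ ȳ⁺_k and x^r_k − x^b_k ≤ ȳ⁻_k for all k; m_k ≥ η⁺ x^r_k and m_k ≥ (1/η⁻) x^r_k − Δη·x^b_k for all k; Σ_{l=1}^{k} [ Δt(η⁺ x^b_l + Λ⁺_{k,l} − d_l) + γ·Θ⁺_{k,l} ] ≤ ȳ − ȳ₀ for all k ∈ {0,…,K}; Σ_{l=1}^{k} [ Δt(η⁺ x^b_l − Λ⁻_{k,l} − d_l) − γ·Θ⁻_{k,l} ] ≥ y̲ − y̲₀ for all k ∈ {0,…,K}; Σ_{k=1}^{K} [ Δt(η⁺ x^b_k + λ⁺_k − d_k) + γ̂·θ⁺_k ] ≤ y* − ŷ̄₀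 + z; Σ_{k=1}^{K} [ Δt(η⁺ x^b_k − λ⁻_k − d_k) − γ̂·θ⁻_k ] ≥ y* − ŷ̲₀ − z; Λ⁺_{k,l} + Σ_{i=l}^{I(k,l)} Θ⁺_{k,i} ≥ η⁺ x^r_l and Λ⁻_{k,l} + Σ_{i=l}^{I(k,l)} Θ⁻_{k,i} ≥ m_l for all k,l ∈ {1,…,K} with l ≤ k; and λ⁺_k + Σ_{i=k}^{Î(K,k)} θ⁺_i ≥ η⁺ x^r_k and λ⁻_k + Σ_{i=k}^{Î(K,k)} θ⁻_i ≥ m_k for all k ∈ {1,…,K}; where I(k,l) = min{k, l + Γ/Δt − 1} and Î(k,l) = min{k, l + Γ̂/Δt − 1}. -/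

import Mathlib

open MeasureTheory Set

noncomputable section

/-- The continuous-time uncertainty set `D` of measurable frequency-deviation
scenarios `δ : [0,T] → [-1,1]` whose total absolute deviation over every
backward window of length `Γ` is at most `γ`. -/
def Dset (T Γ γ : ℝ) : Set (ℝ → ℝ) :=
  {δ | Measurable δ ∧ (∀ t ∈ Icc (0:ℝ) T, δ t ∈ Icc (-1:ℝ) 1) ∧
    ∀ t ∈ Icc (0:ℝ) T, (∫ s in (max (t - Γ) 0)..t, |δ s|) ≤ γ}

/-- The nonnegative part `D⁺` of the continuous uncertainty set. -/
def DsetPlus (T Γ γ : ℝ) : Set (ℝ → ℝ) :=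
  Dset T Γ γ ∩ {δ | ∀ t ∈ Icc (0:ℝ) T, δ t ∈ Icc (0:ℝ) 1}

/-- The discrete uncertainty set `D_K` (with `0`-based indexing): vectors in
`[-1,1]^K` whose sum of absolute values over each backward window of `W = Γ/Δt`
periods is at most `g = γ/Δt`. -/
def DK (K W g : ℕ) : Set (Fin K → ℝ) :=
  {δ | (∀ l, |δ l| ≤ 1) ∧ ∀ k : Fin K,
    (∑ l ∈ Finset.univ.filter
      (fun l : Fin K => (k : ℕ) + 1 - W ≤ (l : ℕ) ∧ (l : ℕ) ≤ (k : ℕ)), |δ l|) ≤ (g : ℝ)}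

/-- The nonnegative part `D_K⁺` of the discrete uncertainty set. -/
def DKplus (K W g : ℕ) : Set (Fin K → ℝ) :=
  DK K W g ∩ {δ | ∀ l, 0 ≤ δ l}

/-- The lifting operator `L` mapping a vector to the piecewise constant function
with value `v k` on `[kΔt, (k+1)Δt)` (0-based), and `v (K-1)` at `t = KΔt`. -/
def lift (Δt : ℝ) {K : ℕ} (v : Fin K → ℝ) : ℝ → ℝ := fun t =>
  if h : min (⌊t / Δt⌋.toNat) (K - 1) < K then v ⟨min (⌊t / Δt⌋.toNat) (K - 1), h⟩ else 0

/-- The averaging operator `L†` mapping a function to its vector of averages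
over the trading intervals. -/
def avg (Δt : ℝ) (K : ℕ) (w : ℝ → ℝ) : Fin K → ℝ := fun k =>
  (1 / Δt) * ∫ s in (((k : ℕ) : ℝ) * Δt)..((((k : ℕ) : ℝ) + 1) * Δt), w s

/-- The integrand of the continuous-time state-of-charge. -/
def socIntegrand (ηp ηm : ℝ) (xb xr δ d : ℝ → ℝ) (s : ℝ) : ℝ :=
  ηp * max (xb s + δ s * xr s) 0 - (1 / ηm) * max (-(xb s + δ s * xr s)) 0 - d s

/-- The continuous-time state-of-charge `y(x^b, x^r, δ, y₀, t)`. -/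
def soc (ηp ηm : ℝ) (xb xr δ d : ℝ → ℝ) (y0 t : ℝ) : ℝ :=
  y0 + ∫ s in (0:ℝ)..t, socIntegrand ηp ηm xb xr δ d s

/-- The discrete-time state-of-charge `y_k(𝐱^b, 𝐱^r, 𝛅, y₀)` (0-based indexing:
the sum extends over the first `k` components). -/
def ysoc (Δt ηp ηm : ℝ) {K : ℕ} (xb xr δ d : Fin K → ℝ) (y0 : ℝ) (k : ℕ) : ℝ :=
  y0 + Δt * ∑ l ∈ Finset.univ.filter (fun l : Fin K => (l : ℕ) < k),
    (ηp * max (xb l + δ l * xr l) 0 - (1 / ηm) * max (-(xb l + δ l * xr l)) 0 - d l)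

/-- Feasibility of `(𝐱^b,𝐱^r,𝐦,z)` in the linear robust problem (R'_K). -/
def RprimeFeasible (Δt ηp ηm : ℝ) {K : ℕ} (W g Wh gh : ℕ) (d ybarp ybarm : Fin K → ℝ)
    (ylo yhi yl0 yu0 ylh yuh ystar : ℝ)
    (p : (Fin K → ℝ) × (Fin K → ℝ)) (m : Fin K → ℝ) (z : ℝ) : Prop :=
  (∀ j : Fin K, p.2 j + p.1 j ≤ ybarp j ∧ p.2 j - p.1 j ≤ ybarm j) ∧
  (∀ j : Fin K, ηp * p.2 j ≤ m j ∧ (1 / ηm) * p.2 j - (1 / ηm - ηp) * p.1 j ≤ m j) ∧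
  (∀ δ ∈ DKplus K W g, ∀ k ≤ K,
    yu0 + Δt * (∑ l ∈ Finset.univ.filter (fun l : Fin K => (l : ℕ) < k),
      (ηp * (p.1 l + δ l * p.2 l) - d l)) ≤ yhi) ∧
  (∀ δ ∈ DKplus K W g, ∀ k ≤ K,
    ylo ≤ yl0 + Δt * (∑ l ∈ Finset.univ.filter (fun l : Fin K => (l : ℕ) < k),
      (ηp * p.1 l - m l * δ l - d l))) ∧
  (∀ δ ∈ DKplus K Wh gh,
    yuh - z + Δt * (∑ j, (ηp * (p.1 j + δ j * p.2 j) - d j)) ≤ ystar) ∧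
  (∀ δ ∈ DKplus K Wh gh,
    ystar ≤ ylh + z + Δt * (∑ j, (ηp * p.1 j - m j * δ j - d j)))

/-- Feasibility of `(𝐱^b,𝐱^r,𝐦,z)` together with the dual multipliers
`λ⁺,λ⁻,θ⁺,θ⁻,Λ⁺,Λ⁻,Θ⁺,Θ⁻` in the linear program (R''_K).  Rows of the matrix
variables are indexed by `kr : Fin K`, corresponding to `k = kr + 1`; the
constraints of (R'_K)/(R''_K) for `k = 0` reduce to `ȳ₀ ≤ ȳ` and `y̲ ≤ y̲₀`. -/
def RdoubleFeasible (Δt ηp ηm γ γh : ℝ) {K : ℕ} (W Wh : ℕ) (d ybarp ybarm : Fin K → ℝ)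
    (ylo yhi yl0 yu0 ylh yuh ystar : ℝ)
    (p : (Fin K → ℝ) × (Fin K → ℝ)) (m : Fin K → ℝ) (z : ℝ)
    (lp lm tp tm : Fin K → ℝ) (Lp Lm Tp Tm : Fin K → Fin K → ℝ) : Prop :=
  (∀ j : Fin K, 0 ≤ lp j ∧ 0 ≤ lm j ∧ 0 ≤ tp j ∧ 0 ≤ tm j) ∧
  (∀ i j : Fin K, 0 ≤ Lp i j ∧ 0 ≤ Lm i j ∧ 0 ≤ Tp i j ∧ 0 ≤ Tm i j) ∧
  (∀ j : Fin K, p.2 j + p.1 j ≤ ybarp j ∧ p.2 j - p.1 j ≤ ybarm j) ∧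
  (∀ j : Fin K, ηp * p.2 j ≤ m j ∧ (1 / ηm) * p.2 j - (1 / ηm - ηp) * p.1 j ≤ m j) ∧
  yu0 ≤ yhi ∧ ylo ≤ yl0 ∧
  (∀ kr : Fin K,
    (∑ l ∈ Finset.univ.filter (fun l : Fin K => (l : ℕ) ≤ (kr : ℕ)),
      (Δt * (ηp * p.1 l + Lp kr l - d l) + γ * Tp kr l)) ≤ yhi - yu0) ∧
  (∀ kr : Fin K,
    ylo - yl0 ≤ ∑ l ∈ Finset.univ.filter (fun l : Fin K => (l : ℕ) ≤ (kr : ℕ)),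
      (Δt * (ηp * p.1 l - Lm kr l - d l) - γ * Tm kr l)) ∧
  (∑ j, (Δt * (ηp * p.1 j + lp j - d j) + γh * tp j)) ≤ ystar - yuh + z ∧
  ystar - ylh - z ≤ (∑ j, (Δt * (ηp * p.1 j - lm j - d j) - γh * tm j)) ∧
  (∀ kr l : Fin K, (l : ℕ) ≤ (kr : ℕ) →
    ηp * p.2 l ≤ Lp kr l + ∑ i ∈ Finset.univ.filter
      (fun i : Fin K => (l : ℕ) ≤ (i : ℕ) ∧ (i : ℕ) ≤ min (kr : ℕ) ((l : ℕ) + W - 1)), Tp kr i) ∧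
  (∀ kr l : Fin K, (l : ℕ) ≤ (kr : ℕ) →
    m l ≤ Lm kr l + ∑ i ∈ Finset.univ.filter
      (fun i : Fin K => (l : ℕ) ≤ (i : ℕ) ∧ (i : ℕ) ≤ min (kr : ℕ) ((l : ℕ) + W - 1)), Tm kr i) ∧
  (∀ j : Fin K,
    ηp * p.2 j ≤ lp j + ∑ i ∈ Finset.univ.filter
      (fun i : Fin K => (j : ℕ) ≤ (i : ℕ) ∧ (i : ℕ) ≤ min (K - 1) ((j : ℕ) + Wh - 1)), tp i) ∧
  (∀ j : Fin K,
    m j ≤ lm j + ∑ i ∈ Finset.univ.filter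
      (fun i : Fin K => (j : ℕ) ≤ (i : ℕ) ∧ (i : ℕ) ≤ min (K - 1) ((j : ℕ) + Wh - 1)), tm i)


section AuxDuality

open scoped InnerProductSpace

variable {ι : Type*} [Fintype ι] {E : Type*} [NormedAddCommGroup E]
  [InnerProductSpace ℝ E] [FiniteDimensional ℝ E]

variable {ι : Type*} [Fintype ι] {E : Type*} [NormedAddCommGroup E]
  [InnerProductSpace ℝ E] [FiniteDimensional ℝ E]

/-- The cone of nonnegative combinations of a finite family. -/
def coneOf (v : ι → E) : Set E :=
  {x | ∃ c : ι → ℝ, (∀ i, 0 ≤ c i) ∧ x = ∑ i, c i • v i}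

/-- "good" index sets: those on which `v` is linearly independent, phrased concretely. -/
def goodInd (v : ι → E) (s : Finset ι) : Prop :=
  ∀ g : ι → ℝ, ∑ i ∈ s, g i • v i = 0 → ∀ i ∈ s, g i = 0

lemma caratheodory_cone (v : ι → E) :
    ∀ N : ℕ, ∀ s : Finset ι, s.card ≤ N → ∀ c : ι → ℝ, (∀ i, 0 ≤ c i) →
      ∃ t : Finset ι, goodInd v t ∧ ∃ c' : ι → ℝ, (∀ i, 0 ≤ c' i) ∧
        ∑ i ∈ t, c' i • v i = ∑ i ∈ s, c i • v i := by
  classical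
  intro N
  induction N with
  | zero =>
    intro s hs c hc
    refine ⟨∅, by intro g _ i hi; exact absurd hi (by simp), c, hc, ?_⟩
    rw [Finset.card_eq_zero.mp (Nat.le_zero.mp hs)]
  | succ N ih =>
    intro s hs c hc
    by_cases hgood : goodInd v s
    · exact ⟨s, hgood, c, hc, rfl⟩
    · have key : ∀ g : ι → ℝ, (∑ i ∈ s, g i • v i = 0) → (∃ j ∈ s, 0 < g j) →
          ∃ t : Finset ι, goodInd v t ∧ ∃ c' : ι → ℝ, (∀ i, 0 ≤ c' i) ∧
            ∑ i ∈ t, c' i • v i = ∑ i ∈ s, c i • v i := by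
        rintro g hsum ⟨j0, hj0s, hj0⟩
        set T : Finset ι := s.filter (fun i => 0 < g i) with hT
        have hTne : T.Nonempty := ⟨j0, by simp [hT, hj0s, hj0]⟩
        obtain ⟨k0, hk0T, hk0min⟩ := T.exists_min_image (fun i => c i / g i) hTne
        have hk0s : k0 ∈ s := (Finset.mem_filter.mp hk0T).1
        have hgk0 : 0 < g k0 := (Finset.mem_filter.mp hk0T).2
        set r : ℝ := c k0 / g k0 with hr
        have hrnn : 0 ≤ r := div_nonneg (hc k0) hgk0.le
        set c2 : ι → ℝ := fun i => if i ∈ s then c i - r * g i else 0 with hc2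
        have hc2nn : ∀ i, 0 ≤ c2 i := by
          intro i
          simp only [hc2]
          split
          · rename_i his
            by_cases hgi : 0 < g i
            · have hle : r ≤ c i / g i := hk0min i (Finset.mem_filter.mpr ⟨his, hgi⟩)
              have := (le_div_iff₀ hgi).mp hle
              linarith
            · have : r * g i ≤ 0 := mul_nonpos_of_nonneg_of_nonpos hrnn (not_lt.mp hgi)
              linarith [hc i]
          · exact le_rfl
        have hc2k0 : c2 k0 = 0 := by
          simp only [hc2, if_pos hk0s, hr]
          rw [div_mul_cancel₀ _ hgk0.ne', sub_self]
        have hsum2 : ∑ i ∈ s.erase k0, c2 i • v i = ∑ i ∈ s, c i • v i := by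
          have h1 : ∑ i ∈ s, c2 i • v i = ∑ i ∈ s, c i • v i := by
            have h2 : ∑ i ∈ s, c2 i • v i = ∑ i ∈ s, (c i • v i - r • (g i • v i)) := by
              refine Finset.sum_congr rfl fun i his => ?_
              simp only [hc2, if_pos his, sub_smul, smul_smul]
            rw [h2, Finset.sum_sub_distrib, ← Finset.smul_sum, hsum, smul_zero, sub_zero]
          rw [← h1, ← Finset.add_sum_erase s _ hk0s, hc2k0, zero_smul, zero_add]
        have hcard : (s.erase k0).card ≤ N := by
          have := Finset.card_erase_of_mem hk0s
          omega
        obtain ⟨t, ht, c3, hc3, hsum3⟩ := ih (s.erase k0) hcard c2 hc2nn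
        exact ⟨t, ht, c3, hc3, by rw [hsum3, hsum2]⟩
      simp only [goodInd, not_forall] at hgood
      obtain ⟨g, hg0, i0, hi0s, hgi0⟩ := hgood
      by_cases hpos : ∃ j ∈ s, 0 < g j
      · exact key g hg0 hpos
      · push_neg at hpos
        refine key (-g) ?_ ⟨i0, hi0s, ?_⟩
        · simp only [Pi.neg_apply, neg_smul, Finset.sum_neg_distrib, hg0, neg_zero]
        · have hle := hpos i0 hi0s
          simp only [Pi.neg_apply]
          rcases lt_or_eq_of_le hle with h | h
          · linarith
          · exact absurd h hgi0

lemma isClosed_piece (v : ι → E) (s : Finset ι) (hs : goodInd v s) :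
    IsClosed {x : E | ∃ c : ι → ℝ, (∀ i, 0 ≤ c i) ∧ x = ∑ i ∈ s, c i • v i} := by
  classical
  let L : ({ i // i ∈ s } → ℝ) →ₗ[ℝ] E :=
    { toFun := fun c => ∑ i : { i // i ∈ s }, c i • v i.1
      map_add' := by intro a b; simp [add_smul, Finset.sum_add_distrib]
      map_smul' := by intro r a; simp [smul_smul, Finset.smul_sum] }
  have hLval : ∀ c : { i // i ∈ s } → ℝ, L c = ∑ i : { i // i ∈ s }, c i • v i.1 :=
    fun _ => rfl
  have hker : LinearMap.ker L = ⊥ := by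
    rw [LinearMap.ker_eq_bot']
    intro c hc
    set cext : ι → ℝ := fun j => if h : j ∈ s then c ⟨j, h⟩ else 0 with hcext
    have hc' : ∑ i ∈ s, cext i • v i = 0 := by
      rw [← Finset.sum_coe_sort s (fun i => cext i • v i), ← hc, hLval]
      exact Finset.sum_congr rfl fun i _ => by simp [hcext, i.2]
    funext i
    have := hs cext hc' i.1 i.2
    simpa [hcext, i.2] using this
  have hembed := LinearMap.isClosedEmbedding_of_injective hker
  have hset : {x : E | ∃ c : ι → ℝ, (∀ i, 0 ≤ c i) ∧ x = ∑ i ∈ s, c i • v i}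
      = L '' {c : { i // i ∈ s } → ℝ | ∀ i, 0 ≤ c i} := by
    ext x
    constructor
    · rintro ⟨c, hc, rfl⟩
      refine ⟨fun i => c i.1, fun i => hc i.1, ?_⟩
      rw [hLval, Finset.sum_coe_sort s (fun i => c i • v i)]
    · rintro ⟨c, hc, rfl⟩
      refine ⟨fun j => if h : j ∈ s then c ⟨j, h⟩ else 0, fun j => ?_, ?_⟩
      · by_cases h : j ∈ s <;> simp [h, hc _]
      · rw [hLval, ← Finset.sum_coe_sort s]
        exact Finset.sum_congr rfl fun i _ => by simp [i.2]
  rw [hset]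
  refine hembed.isClosedMap _ ?_
  have hEq : {c : { i // i ∈ s } → ℝ | ∀ i, 0 ≤ c i} = ⋂ i, {c | 0 ≤ c i} := by
    ext; simp [Set.mem_iInter]
  rw [hEq]
  exact isClosed_iInter fun i => isClosed_le continuous_const (continuous_apply i)

lemma isClosed_coneOf (v : ι → E) : IsClosed (coneOf v) := by
  classical
  have hunion : coneOf v = ⋃ s ∈ {s : Finset ι | goodInd v s},
      {x : E | ∃ c : ι → ℝ, (∀ i, 0 ≤ c i) ∧ x = ∑ i ∈ s, c i • v i} := by
    ext x
    simp only [coneOf, mem_setOf_eq, mem_iUnion, exists_prop]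
    constructor
    · rintro ⟨c, hc, rfl⟩
      obtain ⟨t, ht, c', hc', hsum⟩ :=
        caratheodory_cone v (Finset.univ.card) Finset.univ (le_refl _) c hc
      exact ⟨t, ht, c', hc', by rw [hsum]⟩
    · rintro ⟨s, hs, c, hc, rfl⟩
      refine ⟨fun i => if i ∈ s then c i else 0,
        fun i => by by_cases h : i ∈ s <;> simp [h, hc i], ?_⟩
      simp only [ite_smul, zero_smul]
      rw [Finset.sum_ite_mem, Finset.univ_inter]
  rw [hunion]
  exact (Set.toFinite _).isClosed_biUnion fun s hs => isClosed_piece v s hs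

/-- Farkas-type membership criterion. -/
lemma mem_coneOf_of_inner [CompleteSpace E] (v : ι → E) (t : E)
    (h : ∀ y : E, (∀ i, 0 ≤ ⟪v i, y⟫_ℝ) → 0 ≤ ⟪t, y⟫_ℝ) : t ∈ coneOf v := by
  classical
  by_contra ht
  set C : ConvexCone ℝ E :=
    { carrier := coneOf v
      smul_mem' := by
        rintro r hr x ⟨c, hc, rfl⟩
        exact ⟨fun i => r * c i, fun i => mul_nonneg hr.le (hc i),
          by rw [Finset.smul_sum]; exact Finset.sum_congr rfl fun i _ => by dsimp only; rw [smul_smul]⟩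
      add_mem' := by
        rintro x ⟨c, hc, rfl⟩ y ⟨c', hc', rfl⟩
        exact ⟨fun i => c i + c' i, fun i => add_nonneg (hc i) (hc' i),
          by rw [← Finset.sum_add_distrib]; exact Finset.sum_congr rfl fun i _ => by dsimp only; rw [add_smul]⟩ }
  have hne : (C : Set E).Nonempty := ⟨0, ⟨fun _ => 0, fun _ => le_rfl, by simp⟩⟩
  obtain ⟨y, hy1, hy2⟩ :=
    ProperCone.hyperplane_separation' (E := E)
      ({ carrier := coneOf v
         add_mem' := fun hx hy => C.add_mem' hx hy
         zero_mem' := ⟨fun _ => 0, fun _ => le_rfl, by simp⟩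
         smul_mem' := by
           rintro r x ⟨c, hc, rfl⟩
           exact ⟨fun i => (r : ℝ) * c i, fun i => mul_nonneg r.2 (hc i),
             by change (r : ℝ) • ∑ i, c i • v i = _; rw [Finset.smul_sum]; exact Finset.sum_congr rfl fun i _ => by rw [smul_smul]⟩
         isClosed' := isClosed_coneOf v } : ProperCone ℝ E) ht
  have : 0 ≤ ⟪t, y⟫_ℝ := by
    refine h y fun i => hy1 (v i) ?_
    exact ⟨fun j => if j = i then 1 else 0, fun j => by positivity, by simp⟩
  rw [real_inner_comm] at this
  linarith [real_inner_comm t y]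

/-- Extend a vector on `Fin n` by a value at `none`. -/
def pad {n : ℕ} (b : ℝ) (f : Fin n → ℝ) : Option (Fin n) → ℝ := fun o => o.elim b f

@[simp] lemma pad_none {n : ℕ} (b : ℝ) (f : Fin n → ℝ) : pad b f none = b := rfl
@[simp] lemma pad_some {n : ℕ} (b : ℝ) (f : Fin n → ℝ) (j : Fin n) : pad b f (some j) = f j := rfl

/-- coordinate evaluation as a linear map on Euclidean space -/
def evalLM (κ : Type*) [Fintype κ] (o : κ) : EuclideanSpace ℝ κ →ₗ[ℝ] ℝ :=
  { toFun := fun x => x o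
    map_add' := fun _ _ => rfl
    map_smul' := fun _ _ => rfl }

@[simp] lemma evalLM_apply {κ : Type*} [Fintype κ] (o : κ) (x : EuclideanSpace ℝ κ) :
    evalLM κ o x = x o := rfl

lemma euclidean_inner_eq {κ : Type*} [Fintype κ] (x y : EuclideanSpace ℝ κ) :
    ⟪x, y⟫_ℝ = ∑ o, x o * y o := by
  rw [PiLp.inner_apply]
  exact Finset.sum_congr rfl fun o _ => by rw [RCLike.inner_apply, conj_trivial, mul_comm]

lemma lp_strong_duality {n m : ℕ} (S : Fin m → Finset (Fin n)) (g : ℝ) (a : Fin n → ℝ) (M : ℝ)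
    (h : ∀ δ : Fin n → ℝ, (∀ j, 0 ≤ δ j) → (∀ j, δ j ≤ 1) → (∀ i, ∑ l ∈ S i, δ l ≤ g) →
      ∑ j, a j * δ j ≤ M) :
    ∃ Λ : Fin n → ℝ, ∃ Θ : Fin m → ℝ, (∀ j, 0 ≤ Λ j) ∧ (∀ i, 0 ≤ Θ i) ∧
      (∀ j, a j ≤ Λ j + ∑ i ∈ Finset.univ.filter (fun i => j ∈ S i), Θ i) ∧
      (∑ j, Λ j) + g * (∑ i, Θ i) ≤ M := by
  classical
  set vfun : (Fin m ⊕ Fin n ⊕ Fin n ⊕ Unit) → Option (Fin n) → ℝ :=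
    Sum.elim (fun i => pad g (fun j => if j ∈ S i then 1 else 0))
      (Sum.elim (fun j0 => pad 1 (fun j => if j = j0 then 1 else 0))
        (Sum.elim (fun j0 => pad 0 (fun j => if j = j0 then -1 else 0))
          (fun _ => pad 1 0))) with hvfun
  set v : (Fin m ⊕ Fin n ⊕ Fin n ⊕ Unit) → EuclideanSpace ℝ (Option (Fin n)) :=
    fun i => (WithLp.equiv 2 (Option (Fin n) → ℝ)).symm (vfun i) with hv
  set tgt : EuclideanSpace ℝ (Option (Fin n)) :=
    (WithLp.equiv 2 (Option (Fin n) → ℝ)).symm (pad M a) with htgt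
  have hveval : ∀ i o, v i o = vfun i o := fun i o => rfl
  have htgteval : ∀ o, tgt o = pad M a o := fun o => rfl
  have hmem : tgt ∈ coneOf v := by
    apply mem_coneOf_of_inner
    intro y hy
    have hτ : (0:ℝ) ≤ y none := by
      have := hy (Sum.inr (Sum.inr (Sum.inr ())))
      rw [euclidean_inner_eq] at this
      simpa [Fintype.sum_option, hveval, hvfun] using this
    have hneg : ∀ j, y (some j) ≤ 0 := by
      intro j
      have := hy (Sum.inr (Sum.inr (Sum.inl j)))
      rw [euclidean_inner_eq] at this
      simp only [hveval, hvfun, Fintype.sum_option, Sum.elim_inr, Sum.elim_inl,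
        pad_none, pad_some, ite_mul, neg_mul, one_mul, zero_mul, zero_add,
        Finset.sum_ite_eq', Finset.mem_univ, if_true] at this
      linarith
    have hone : ∀ j, 0 ≤ y none + y (some j) := by
      intro j
      have := hy (Sum.inr (Sum.inl j))
      rw [euclidean_inner_eq] at this
      simp only [hveval, hvfun, Fintype.sum_option, Sum.elim_inr, Sum.elim_inl,
        pad_none, pad_some, ite_mul, one_mul, zero_mul,
        Finset.sum_ite_eq', Finset.mem_univ, if_true] at this
      linarith
    have hwin : ∀ i, 0 ≤ g * y none + ∑ l ∈ S i, y (some l) := by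
      intro i
      have := hy (Sum.inl i)
      rw [euclidean_inner_eq] at this
      simp only [hveval, hvfun, Fintype.sum_option, Sum.elim_inl,
        pad_none, pad_some, ite_mul, one_mul, zero_mul] at this
      rw [Finset.sum_ite_mem, Finset.univ_inter] at this
      exact this
    rw [euclidean_inner_eq]
    rw [Fintype.sum_option]
    simp only [htgteval, pad_none, pad_some]
    rcases eq_or_lt_of_le hτ with hτ0 | hτpos
    · have hz : ∀ j, y (some j) = 0 := fun j => le_antisymm (hneg j) (by linarith [hone j])
      simp only [hz, mul_zero, Finset.sum_const_zero, ← hτ0, add_zero]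
      exact le_rfl
    · set δ : Fin n → ℝ := fun j => -(y (some j)) / y none with hδ
      have hδ0 : ∀ j, 0 ≤ δ j := fun j => div_nonneg (by linarith [hneg j]) hτpos.le
      have hδ1 : ∀ j, δ j ≤ 1 := by
        intro j
        rw [hδ, div_le_one hτpos]
        linarith [hone j]
      have hδw : ∀ i, ∑ l ∈ S i, δ l ≤ g := by
        intro i
        have : ∑ l ∈ S i, δ l = (∑ l ∈ S i, -(y (some l))) / y none := by
          rw [Finset.sum_div]
        rw [this, div_le_iff₀ hτpos]
        have := hwin i
        have hsumneg : ∑ l ∈ S i, -(y (some l)) = -∑ l ∈ S i, y (some l) := by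
          rw [Finset.sum_neg_distrib]
        nlinarith [hwin i]
      have hobj := h δ hδ0 hδ1 hδw
      have hsum : ∑ j, a j * δ j = (∑ j, a j * -(y (some j))) / y none := by
        rw [Finset.sum_div]
        exact Finset.sum_congr rfl fun j _ => by rw [hδ, mul_div_assoc]
      rw [hsum, div_le_iff₀ hτpos] at hobj
      have : ∑ j, a j * -(y (some j)) = -∑ j, a j * y (some j) := by
        rw [← Finset.sum_neg_distrib]
        exact Finset.sum_congr rfl fun j _ => by ring
      rw [this] at hobj
      nlinarith
  obtain ⟨c, hc, hrep⟩ := hmem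
  refine ⟨fun j => c (Sum.inr (Sum.inl j)), fun i => c (Sum.inl i),
    fun j => hc _, fun i => hc _, ?_, ?_⟩
  · intro j
    have := congrArg (evalLM (Option (Fin n)) (some j)) hrep
    rw [map_sum] at this
    simp only [_root_.map_smul, evalLM_apply, smul_eq_mul, htgteval, hveval, pad_some] at this
    rw [Fintype.sum_sum_type, Fintype.sum_sum_type, Fintype.sum_sum_type] at this
    simp only [hvfun, Sum.elim_inl, Sum.elim_inr, pad_some, Pi.zero_apply,
      mul_ite, mul_one, mul_zero, mul_neg, Finset.sum_ite_eq, Finset.sum_ite_eq',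
      Finset.mem_univ, if_true,
      Finset.sum_const_zero, Finset.univ_unique, Finset.sum_singleton, add_zero] at this
    rw [Finset.sum_filter]
    have h2 : 0 ≤ c (Sum.inr (Sum.inr (Sum.inl j))) := hc _
    linarith [this]
  · have := congrArg (evalLM (Option (Fin n)) none) hrep
    rw [map_sum] at this
    simp only [_root_.map_smul, evalLM_apply, smul_eq_mul, htgteval, hveval, pad_none] at this
    rw [Fintype.sum_sum_type, Fintype.sum_sum_type, Fintype.sum_sum_type] at this
    simp only [hvfun, Sum.elim_inl, Sum.elim_inr, pad_none, mul_one, mul_zero,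
      Finset.sum_const_zero, Finset.univ_unique, Finset.sum_singleton, add_zero] at this
    have h3 : 0 ≤ c (Sum.inr (Sum.inr (Sum.inr ()))) := hc _
    have h4 : ∑ i : Fin m, c (Sum.inl i) * g = g * ∑ i : Fin m, c (Sum.inl i) := by
      rw [← Finset.sum_mul, mul_comm]
    linarith [this]

/-- Strong duality for the windowed inner maximization. -/
lemma window_dual {K W g : ℕ} (hW : 0 < W) (kr : ℕ) (hkr : kr < K) (a : Fin K → ℝ) (M : ℝ)
    (h : ∀ δ ∈ DKplus K W g,
      ∑ l ∈ Finset.univ.filter (fun l : Fin K => (l : ℕ) ≤ kr), a l * δ l ≤ M) :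
    ∃ Λ Θ : Fin K → ℝ, (∀ l, 0 ≤ Λ l) ∧ (∀ i, 0 ≤ Θ i) ∧
      (∀ l : Fin K, (l : ℕ) ≤ kr → a l ≤ Λ l + ∑ i ∈ Finset.univ.filter
        (fun i : Fin K => (l : ℕ) ≤ (i : ℕ) ∧ (i : ℕ) ≤ min kr ((l : ℕ) + W - 1)), Θ i) ∧
      (∑ l ∈ Finset.univ.filter (fun l : Fin K => (l : ℕ) ≤ kr), Λ l)
        + (g : ℝ) * (∑ i ∈ Finset.univ.filter (fun i : Fin K => (i : ℕ) ≤ kr), Θ i) ≤ M := by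
  classical
  set S : Fin K → Finset (Fin K) := fun i =>
    if (i : ℕ) ≤ kr then
      Finset.univ.filter (fun l : Fin K => (i : ℕ) + 1 - W ≤ (l : ℕ) ∧ (l : ℕ) ≤ (i : ℕ))
    else ∅ with hS
  set a' : Fin K → ℝ := fun l => if (l : ℕ) ≤ kr then a l else 0 with ha'
  have key : ∀ δ : Fin K → ℝ, (∀ j, 0 ≤ δ j) → (∀ j, δ j ≤ 1) →
      (∀ i, ∑ l ∈ S i, δ l ≤ (g : ℝ)) → ∑ j, a' j * δ j ≤ M := by
    intro δ hδ0 hδ1 hδw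
    set δ' : Fin K → ℝ := fun l => if (l : ℕ) ≤ kr then δ l else 0 with hδ'
    have hδ'0 : ∀ l, 0 ≤ δ' l := by
      intro l; simp only [hδ']; split; exacts [hδ0 l, le_rfl]
    have hδ'1 : ∀ l, δ' l ≤ 1 := by
      intro l; simp only [hδ']; split; exacts [hδ1 l, zero_le_one]
    have hmem : δ' ∈ DKplus K W g := by
      refine ⟨⟨fun l => ?_, fun k => ?_⟩, hδ'0⟩
      · rw [abs_le]; exact ⟨by linarith [hδ'0 l], hδ'1 l⟩
      · have habs : ∀ l ∈ Finset.univ.filter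
            (fun l : Fin K => (k : ℕ) + 1 - W ≤ (l : ℕ) ∧ (l : ℕ) ≤ (k : ℕ)),
            |δ' l| = δ' l := fun l _ => abs_of_nonneg (hδ'0 l)
        rw [Finset.sum_congr rfl habs]
        by_cases hk : (k : ℕ) ≤ kr
        · have hsame : ∑ l ∈ Finset.univ.filter
              (fun l : Fin K => (k : ℕ) + 1 - W ≤ (l : ℕ) ∧ (l : ℕ) ≤ (k : ℕ)), δ' l
              = ∑ l ∈ S k, δ l := by
            rw [hS]; simp only [hk, if_true]
            refine Finset.sum_congr rfl fun l hl => ?_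
            simp only [Finset.mem_filter] at hl
            simp only [hδ', if_pos (le_trans hl.2.2 hk)]
          rw [hsame]; exact hδw k
        · push_neg at hk
          have hsplit : ∑ l ∈ Finset.univ.filter
              (fun l : Fin K => (k : ℕ) + 1 - W ≤ (l : ℕ) ∧ (l : ℕ) ≤ (k : ℕ)), δ' l
              = ∑ l ∈ (Finset.univ.filter
              (fun l : Fin K => (k : ℕ) + 1 - W ≤ (l : ℕ) ∧ (l : ℕ) ≤ (k : ℕ))).filter
                (fun l : Fin K => (l : ℕ) ≤ kr), δ l := by
            conv_rhs => rw [Finset.sum_filter]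
          rw [hsplit]
          have hsub : (Finset.univ.filter
              (fun l : Fin K => (k : ℕ) + 1 - W ≤ (l : ℕ) ∧ (l : ℕ) ≤ (k : ℕ))).filter
                (fun l : Fin K => (l : ℕ) ≤ kr)
              ⊆ S ⟨kr, hkr⟩ := by
            intro l hl
            simp only [Finset.mem_filter] at hl
            rw [hS]
            simp only [le_refl, if_true, Finset.mem_filter, Finset.mem_univ, true_and]
            omega
          calc ∑ l ∈ _, δ l ≤ ∑ l ∈ S ⟨kr, hkr⟩, δ l :=
                Finset.sum_le_sum_of_subset_of_nonneg hsub (fun l _ _ => hδ0 l)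
            _ ≤ (g : ℝ) := hδw _
    have := h δ' hmem
    calc ∑ j, a' j * δ j
        = ∑ l ∈ Finset.univ.filter (fun l : Fin K => (l : ℕ) ≤ kr), a l * δ' l := by
          rw [Finset.sum_filter]
          refine Finset.sum_congr rfl fun l _ => ?_
          simp only [ha', hδ', ite_mul, zero_mul]
          by_cases hl : (l : ℕ) ≤ kr <;> simp [hl]
      _ ≤ M := this
  obtain ⟨Λ, Θ, hΛ, hΘ, hcov, hobj⟩ := lp_strong_duality S (g : ℝ) a' M key
  refine ⟨Λ, Θ, hΛ, hΘ, fun l hl => ?_, ?_⟩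
  · have := hcov l
    rw [ha'] at this
    simp only [if_pos hl] at this
    have hfe : Finset.univ.filter (fun i : Fin K => l ∈ S i)
        = Finset.univ.filter
          (fun i : Fin K => (l : ℕ) ≤ (i : ℕ) ∧ (i : ℕ) ≤ min kr ((l : ℕ) + W - 1)) := by
      refine Finset.filter_congr fun i _ => ?_
      rw [hS]
      by_cases hi : (i : ℕ) ≤ kr
      · simp only [hi, if_true, Finset.mem_filter, Finset.mem_univ, true_and]
        constructor
        · rintro ⟨h1, h2⟩; omega
        · rintro ⟨h1, h2⟩; omega
      · simp only [hi, if_false, Finset.notMem_empty, false_iff]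
        omega
    rw [hfe] at this
    exact this
  · have h1 : ∑ l ∈ Finset.univ.filter (fun l : Fin K => (l : ℕ) ≤ kr), Λ l ≤ ∑ l, Λ l :=
      Finset.sum_le_sum_of_subset_of_nonneg (Finset.filter_subset _ _) (fun l _ _ => hΛ l)
    have h2 : ∑ i ∈ Finset.univ.filter (fun i : Fin K => (i : ℕ) ≤ kr), Θ i ≤ ∑ i, Θ i :=
      Finset.sum_le_sum_of_subset_of_nonneg (Finset.filter_subset _ _) (fun i _ _ => hΘ i)
    have h3 : (0:ℝ) ≤ (g : ℝ) := Nat.cast_nonneg g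
    nlinarith [hobj]

/-- Weak duality for the windowed inner maximization. -/
lemma window_primal {K W g : ℕ} (hW : 0 < W) (kr : ℕ) (hkr : kr < K) (a : Fin K → ℝ) (M : ℝ)
    (Λ Θ : Fin K → ℝ) (hΛ : ∀ l, 0 ≤ Λ l) (hΘ : ∀ i, 0 ≤ Θ i)
    (hcov : ∀ l : Fin K, (l : ℕ) ≤ kr → a l ≤ Λ l + ∑ i ∈ Finset.univ.filter
        (fun i : Fin K => (l : ℕ) ≤ (i : ℕ) ∧ (i : ℕ) ≤ min kr ((l : ℕ) + W - 1)), Θ i)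
    (hobj : (∑ l ∈ Finset.univ.filter (fun l : Fin K => (l : ℕ) ≤ kr), Λ l)
        + (g : ℝ) * (∑ i ∈ Finset.univ.filter (fun i : Fin K => (i : ℕ) ≤ kr), Θ i) ≤ M) :
    ∀ δ ∈ DKplus K W g,
      ∑ l ∈ Finset.univ.filter (fun l : Fin K => (l : ℕ) ≤ kr), a l * δ l ≤ M := by
  classical
  rintro δ ⟨⟨habs, hwin⟩, hδ0⟩
  have hδ1 : ∀ l, δ l ≤ 1 := fun l => (abs_le.mp (habs l)).2
  have hwin' : ∀ k : Fin K, (∑ l ∈ Finset.univ.filter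
      (fun l : Fin K => (k : ℕ) + 1 - W ≤ (l : ℕ) ∧ (l : ℕ) ≤ (k : ℕ)), δ l) ≤ (g : ℝ) := by
    intro k
    have := hwin k
    rwa [Finset.sum_congr rfl (fun l _ => abs_of_nonneg (hδ0 l))] at this
  set F := Finset.univ.filter (fun l : Fin K => (l : ℕ) ≤ kr) with hF
  set G := Finset.univ.filter (fun i : Fin K => (i : ℕ) ≤ kr) with hG
  set cov : Fin K → Finset (Fin K) := fun l => Finset.univ.filter
      (fun i : Fin K => (l : ℕ) ≤ (i : ℕ) ∧ (i : ℕ) ≤ min kr ((l : ℕ) + W - 1)) with hcovset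
  set win : Fin K → Finset (Fin K) := fun i => Finset.univ.filter
      (fun l : Fin K => (l : ℕ) ≤ kr ∧ (l : ℕ) ≤ (i : ℕ) ∧ (i : ℕ) ≤ min kr ((l : ℕ) + W - 1))
      with hwinset
  have step1 : ∑ l ∈ F, a l * δ l ≤ ∑ l ∈ F, (Λ l + ∑ i ∈ cov l, Θ i) * δ l := by
    refine Finset.sum_le_sum fun l hl => ?_
    have hlkr : (l : ℕ) ≤ kr := (Finset.mem_filter.mp hl).2
    exact mul_le_mul_of_nonneg_right (hcov l hlkr) (hδ0 l)
  have step2 : ∑ l ∈ F, (Λ l + ∑ i ∈ cov l, Θ i) * δ l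
      = ∑ l ∈ F, Λ l * δ l + ∑ l ∈ F, ∑ i ∈ cov l, Θ i * δ l := by
    rw [← Finset.sum_add_distrib]
    refine Finset.sum_congr rfl fun l _ => ?_
    rw [add_mul, Finset.sum_mul]
  have step3 : ∑ l ∈ F, Λ l * δ l ≤ ∑ l ∈ F, Λ l :=
    Finset.sum_le_sum fun l _ => mul_le_of_le_one_right (hΛ l) (hδ1 l)
  have swap : ∑ l ∈ F, ∑ i ∈ cov l, Θ i * δ l = ∑ i ∈ G, ∑ l ∈ win i, Θ i * δ l := by
    refine Finset.sum_comm' ?_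
    intro l i
    simp only [hF, hG, hcovset, hwinset, Finset.mem_filter, Finset.mem_univ, true_and]
    omega
  have step4 : ∀ i ∈ G, ∑ l ∈ win i, Θ i * δ l ≤ Θ i * (g : ℝ) := by
    intro i hi
    rw [← Finset.mul_sum]
    refine mul_le_mul_of_nonneg_left ?_ (hΘ i)
    have hsub : win i ⊆ Finset.univ.filter
        (fun l : Fin K => (i : ℕ) + 1 - W ≤ (l : ℕ) ∧ (l : ℕ) ≤ (i : ℕ)) := by
      intro l hl
      simp only [hwinset, Finset.mem_filter, Finset.mem_univ, true_and] at hl ⊢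
      omega
    calc ∑ l ∈ win i, δ l
        ≤ ∑ l ∈ Finset.univ.filter
            (fun l : Fin K => (i : ℕ) + 1 - W ≤ (l : ℕ) ∧ (l : ℕ) ≤ (i : ℕ)), δ l :=
          Finset.sum_le_sum_of_subset_of_nonneg hsub (fun l _ _ => hδ0 l)
      _ ≤ (g : ℝ) := hwin' i
  have step5 : ∑ i ∈ G, ∑ l ∈ win i, Θ i * δ l ≤ (g : ℝ) * ∑ i ∈ G, Θ i := by
    calc ∑ i ∈ G, ∑ l ∈ win i, Θ i * δ l ≤ ∑ i ∈ G, Θ i * (g : ℝ) :=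
          Finset.sum_le_sum step4
      _ = (g : ℝ) * ∑ i ∈ G, Θ i := by rw [← Finset.sum_mul, mul_comm]
  rw [step2, swap] at step1
  linarith [step1, step3, step5]

-- small algebra helpers
lemma le_div_of_mul_le {Δt X C : ℝ} (hΔt : 0 < Δt) (h : Δt * X ≤ C) : X ≤ C / Δt := by
  rw [le_div_iff₀ hΔt]; linarith [mul_comm X Δt]

lemma mul_le_of_le_div {Δt X C : ℝ} (hΔt : 0 < Δt) (h : X ≤ C / Δt) : Δt * X ≤ C := by
  rw [le_div_iff₀ hΔt] at h; linarith [mul_comm X Δt]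

lemma sum_split1 {K : ℕ} (s : Finset (Fin K)) (c : ℝ) (xb xr δ d : Fin K → ℝ) :
    ∑ l ∈ s, (c * (xb l + δ l * xr l) - d l)
      = (∑ l ∈ s, (c * xb l - d l)) + ∑ l ∈ s, (c * xr l) * δ l := by
  rw [← Finset.sum_add_distrib]; exact Finset.sum_congr rfl fun l _ => by ring

lemma sum_split2 {K : ℕ} (s : Finset (Fin K)) (c : ℝ) (xb m δ d : Fin K → ℝ) :
    ∑ l ∈ s, (c * xb l - m l * δ l - d l)
      = (∑ l ∈ s, (c * xb l - d l)) - ∑ l ∈ s, m l * δ l := by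
  rw [← Finset.sum_sub_distrib]; exact Finset.sum_congr rfl fun l _ => by ring

lemma sum_split3 {K : ℕ} (s : Finset (Fin K)) (Δt c : ℝ) (g : ℕ) (xb d Λ Θ : Fin K → ℝ) :
    ∑ l ∈ s, (Δt * (c * xb l + Λ l - d l) + ((g : ℝ) * Δt) * Θ l)
      = Δt * ((∑ l ∈ s, (c * xb l - d l)) + ((∑ l ∈ s, Λ l)
          + (g : ℝ) * (∑ l ∈ s, Θ l))) := by
  have h1 : ∀ l ∈ s, Δt * (c * xb l + Λ l - d l) + ((g : ℝ) * Δt) * Θ l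
      = Δt * (c * xb l - d l) + (Δt * Λ l + ((g : ℝ) * Δt) * Θ l) := fun l _ => by ring
  rw [Finset.sum_congr rfl h1, Finset.sum_add_distrib, Finset.sum_add_distrib,
    ← Finset.mul_sum, ← Finset.mul_sum, ← Finset.mul_sum]
  ring

lemma sum_split4 {K : ℕ} (s : Finset (Fin K)) (Δt c : ℝ) (g : ℕ) (xb d Λ Θ : Fin K → ℝ) :
    ∑ l ∈ s, (Δt * (c * xb l - Λ l - d l) - ((g : ℝ) * Δt) * Θ l)
      = Δt * ((∑ l ∈ s, (c * xb l - d l)) - ((∑ l ∈ s, Λ l)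
          + (g : ℝ) * (∑ l ∈ s, Θ l))) := by
  have h1 : ∀ l ∈ s, Δt * (c * xb l - Λ l - d l) - ((g : ℝ) * Δt) * Θ l
      = Δt * (c * xb l - d l) - (Δt * Λ l + ((g : ℝ) * Δt) * Θ l) := fun l _ => by ring
  rw [Finset.sum_congr rfl h1, Finset.sum_sub_distrib, Finset.sum_add_distrib,
    ← Finset.mul_sum, ← Finset.mul_sum, ← Finset.mul_sum]
  ring

lemma zero_mem_DKplus (K W g : ℕ) : (fun _ : Fin K => (0:ℝ)) ∈ DKplus K W g := by
  refine ⟨⟨fun l => by simp, fun k => by simp⟩, fun l => le_rfl⟩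

lemma filter_lt_succ (K kr : ℕ) :
    Finset.univ.filter (fun l : Fin K => (l : ℕ) < kr + 1)
      = Finset.univ.filter (fun l : Fin K => (l : ℕ) ≤ kr) :=
  Finset.filter_congr fun l _ => by simp [Nat.lt_succ_iff]

lemma filter_lt_zero (K : ℕ) :
    Finset.univ.filter (fun l : Fin K => (l : ℕ) < 0) = ∅ :=
  Finset.filter_false_of_mem fun l _ => by omega

lemma filter_le_last (K : ℕ) :
    Finset.univ.filter (fun l : Fin K => (l : ℕ) ≤ K - 1) = Finset.univ :=
  Finset.filter_true_of_mem fun l _ => by omega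

lemma prime_to_double {K : ℕ} {Δt : ℝ} (hΔt : 0 < Δt) (hK : 0 < K)
    {W g Wh gh : ℕ} (hW : 0 < W) (hWh : 0 < Wh)
    {γ γh : ℝ} (hγ : γ = g * Δt) (hγh : γh = gh * Δt)
    {ηp ηm : ℝ} {d ybarp ybarm : Fin K → ℝ} {ylo yhi yl0 yu0 ylh yuh ystar : ℝ}
    {p : (Fin K → ℝ) × (Fin K → ℝ)} {m : Fin K → ℝ} {z : ℝ}
    (hfeas : RprimeFeasible Δt ηp ηm W g Wh gh d ybarp ybarm ylo yhi yl0 yu0 ylh yuh ystar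
      p m z) :
    ∃ lp lm tp tm : Fin K → ℝ, ∃ Lp Lm Tp Tm : Fin K → Fin K → ℝ,
      RdoubleFeasible Δt ηp ηm γ γh W Wh d ybarp ybarm ylo yhi yl0 yu0 ylh yuh ystar p m z
        lp lm tp tm Lp Lm Tp Tm := by
  obtain ⟨h1, h2, h3, h4, h5, h6⟩ := hfeas
  have hyu : yu0 ≤ yhi := by
    have := h3 _ (zero_mem_DKplus K W g) 0 (Nat.zero_le K)
    rw [filter_lt_zero] at this
    simpa using this
  have hyl : ylo ≤ yl0 := by
    have := h4 _ (zero_mem_DKplus K W g) 0 (Nat.zero_le K)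
    rw [filter_lt_zero] at this
    simpa using this
  -- upper rows
  have hrowU : ∀ kr : Fin K, ∃ Λ Θ : Fin K → ℝ, (∀ l, 0 ≤ Λ l) ∧ (∀ i, 0 ≤ Θ i) ∧
      (∀ l : Fin K, (l : ℕ) ≤ (kr : ℕ) → ηp * p.2 l ≤ Λ l +
        ∑ i ∈ Finset.univ.filter
          (fun i : Fin K => (l : ℕ) ≤ (i : ℕ) ∧ (i : ℕ) ≤ min (kr : ℕ) ((l : ℕ) + W - 1)), Θ i) ∧
      (∑ l ∈ Finset.univ.filter (fun l : Fin K => (l : ℕ) ≤ (kr : ℕ)), Λ l)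
        + (g : ℝ) * (∑ i ∈ Finset.univ.filter (fun i : Fin K => (i : ℕ) ≤ (kr : ℕ)), Θ i)
        ≤ (yhi - yu0) / Δt
          - ∑ l ∈ Finset.univ.filter (fun l : Fin K => (l : ℕ) ≤ (kr : ℕ)),
              (ηp * p.1 l - d l) := by
    intro kr
    refine window_dual hW (kr : ℕ) kr.isLt (fun l => ηp * p.2 l) _ ?_
    intro δ hδ
    have h3k := h3 δ hδ ((kr : ℕ) + 1) (by omega)
    rw [filter_lt_succ, sum_split1] at h3k
    set B := ∑ l ∈ Finset.univ.filter (fun l : Fin K => (l : ℕ) ≤ (kr : ℕ)),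
        (ηp * p.1 l - d l) with hB
    set S := ∑ l ∈ Finset.univ.filter (fun l : Fin K => (l : ℕ) ≤ (kr : ℕ)),
        (ηp * p.2 l) * δ l with hS
    have hmul : Δt * (B + S) ≤ yhi - yu0 := by linarith
    have hdiv := le_div_of_mul_le hΔt hmul
    have : S ≤ (yhi - yu0) / Δt - B := by linarith
    exact this
  -- lower rows
  have hrowL : ∀ kr : Fin K, ∃ Λ Θ : Fin K → ℝ, (∀ l, 0 ≤ Λ l) ∧ (∀ i, 0 ≤ Θ i) ∧
      (∀ l : Fin K, (l : ℕ) ≤ (kr : ℕ) → m l ≤ Λ l +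
        ∑ i ∈ Finset.univ.filter
          (fun i : Fin K => (l : ℕ) ≤ (i : ℕ) ∧ (i : ℕ) ≤ min (kr : ℕ) ((l : ℕ) + W - 1)), Θ i) ∧
      (∑ l ∈ Finset.univ.filter (fun l : Fin K => (l : ℕ) ≤ (kr : ℕ)), Λ l)
        + (g : ℝ) * (∑ i ∈ Finset.univ.filter (fun i : Fin K => (i : ℕ) ≤ (kr : ℕ)), Θ i)
        ≤ (∑ l ∈ Finset.univ.filter (fun l : Fin K => (l : ℕ) ≤ (kr : ℕ)),
              (ηp * p.1 l - d l)) - (ylo - yl0) / Δt := by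
    intro kr
    refine window_dual hW (kr : ℕ) kr.isLt m _ ?_
    intro δ hδ
    have h4k := h4 δ hδ ((kr : ℕ) + 1) (by omega)
    rw [filter_lt_succ, sum_split2] at h4k
    set B := ∑ l ∈ Finset.univ.filter (fun l : Fin K => (l : ℕ) ≤ (kr : ℕ)),
        (ηp * p.1 l - d l) with hB
    set S := ∑ l ∈ Finset.univ.filter (fun l : Fin K => (l : ℕ) ≤ (kr : ℕ)), m l * δ l with hS
    have hmul : Δt * (-(B - S)) ≤ yl0 - ylo := by
      have hring : Δt * (-(B - S)) = -(Δt * (B - S)) := by ring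
      linarith
    have hdiv := le_div_of_mul_le hΔt hmul
    have hq : (yl0 - ylo) / Δt = -((ylo - yl0) / Δt) := by ring
    linarith
  -- hat upper
  have hlastlt : K - 1 < K := by omega
  have hhatU : ∃ Λ Θ : Fin K → ℝ, (∀ l, 0 ≤ Λ l) ∧ (∀ i, 0 ≤ Θ i) ∧
      (∀ l : Fin K, (l : ℕ) ≤ K - 1 → ηp * p.2 l ≤ Λ l +
        ∑ i ∈ Finset.univ.filter
          (fun i : Fin K => (l : ℕ) ≤ (i : ℕ) ∧ (i : ℕ) ≤ min (K - 1) ((l : ℕ) + Wh - 1)), Θ i) ∧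
      (∑ l ∈ Finset.univ.filter (fun l : Fin K => (l : ℕ) ≤ K - 1), Λ l)
        + (gh : ℝ) * (∑ i ∈ Finset.univ.filter (fun i : Fin K => (i : ℕ) ≤ K - 1), Θ i)
        ≤ (ystar - yuh + z) / Δt - ∑ l, (ηp * p.1 l - d l) := by
    refine window_dual hWh (K - 1) hlastlt (fun l => ηp * p.2 l) _ ?_
    intro δ hδ
    have h5k := h5 δ hδ
    rw [sum_split1] at h5k
    rw [filter_le_last]
    set B := ∑ l, (ηp * p.1 l - d l) with hB
    set S := ∑ l, (ηp * p.2 l) * δ l with hS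
    have hmul : Δt * (B + S) ≤ ystar - yuh + z := by linarith
    have hdiv := le_div_of_mul_le hΔt hmul
    have : S ≤ (ystar - yuh + z) / Δt - B := by linarith
    exact this
  -- hat lower
  have hhatL : ∃ Λ Θ : Fin K → ℝ, (∀ l, 0 ≤ Λ l) ∧ (∀ i, 0 ≤ Θ i) ∧
      (∀ l : Fin K, (l : ℕ) ≤ K - 1 → m l ≤ Λ l +
        ∑ i ∈ Finset.univ.filter
          (fun i : Fin K => (l : ℕ) ≤ (i : ℕ) ∧ (i : ℕ) ≤ min (K - 1) ((l : ℕ) + Wh - 1)), Θ i) ∧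
      (∑ l ∈ Finset.univ.filter (fun l : Fin K => (l : ℕ) ≤ K - 1), Λ l)
        + (gh : ℝ) * (∑ i ∈ Finset.univ.filter (fun i : Fin K => (i : ℕ) ≤ K - 1), Θ i)
        ≤ (∑ l, (ηp * p.1 l - d l)) - (ystar - ylh - z) / Δt := by
    refine window_dual hWh (K - 1) hlastlt m _ ?_
    intro δ hδ
    have h6k := h6 δ hδ
    rw [sum_split2] at h6k
    rw [filter_le_last]
    set B := ∑ l, (ηp * p.1 l - d l) with hB
    set S := ∑ l, m l * δ l with hS
    have hmul : Δt * (-(B - S)) ≤ ylh + z - ystar := by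
      have hring : Δt * (-(B - S)) = -(Δt * (B - S)) := by ring
      linarith
    have hdiv := le_div_of_mul_le hΔt hmul
    have hq : (ylh + z - ystar) / Δt = -((ystar - ylh - z) / Δt) := by ring
    linarith
  obtain ⟨lpf, tpf, hlp0, htp0, hlpcov, hlpobj⟩ := hhatU
  obtain ⟨lmf, tmf, hlm0, htm0, hlmcov, hlmobj⟩ := hhatL
  choose Lpf Tpf hLp0 hTp0 hLpcov hLpobj using hrowU
  choose Lmf Tmf hLm0 hTm0 hLmcov hLmobj using hrowL
  rw [filter_le_last] at hlpobj hlmobj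
  refine ⟨lpf, lmf, tpf, tmf, Lpf, Lmf, Tpf, Tmf,
    fun j => ⟨hlp0 j, hlm0 j, htp0 j, htm0 j⟩,
    fun i j => ⟨hLp0 i j, hLm0 i j, hTp0 i j, hTm0 i j⟩,
    h1, h2, hyu, hyl, ?_, ?_, ?_, ?_,
    fun kr l hl => hLpcov kr l hl, fun kr l hl => hLmcov kr l hl,
    fun j => hlpcov j (by omega), fun j => hlmcov j (by omega)⟩
  · intro kr
    rw [hγ, sum_split3]
    refine mul_le_of_le_div hΔt ?_
    have := hLpobj kr
    linarith
  · intro kr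
    rw [hγ, sum_split4]
    set B := ∑ l ∈ Finset.univ.filter (fun l : Fin K => (l : ℕ) ≤ (kr : ℕ)),
        (ηp * p.1 l - d l) with hB
    set T := (∑ l ∈ Finset.univ.filter (fun l : Fin K => (l : ℕ) ≤ (kr : ℕ)), Lmf kr l)
        + (g : ℝ) * ∑ l ∈ Finset.univ.filter (fun l : Fin K => (l : ℕ) ≤ (kr : ℕ)),
          Tmf kr l with hT
    have hX : T ≤ B - (ylo - yl0) / Δt := hLmobj kr
    have hq : (yl0 - ylo) / Δt = -((ylo - yl0) / Δt) := by ring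
    have h2' : -(B - T) ≤ (yl0 - ylo) / Δt := by linarith
    have h3' := mul_le_of_le_div hΔt h2'
    have h4' : Δt * (-(B - T)) = -(Δt * (B - T)) := by ring
    linarith
  · rw [hγh, sum_split3]
    refine mul_le_of_le_div hΔt ?_
    linarith [hlpobj]
  · rw [hγh, sum_split4]
    set B := ∑ l, (ηp * p.1 l - d l) with hB
    set T := (∑ l, lmf l) + (gh : ℝ) * ∑ l, tmf l with hT
    have hX : T ≤ B - (ystar - ylh - z) / Δt := hlmobj
    have hq : (ylh + z - ystar) / Δt = -((ystar - ylh - z) / Δt) := by ring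
    have h2' : -(B - T) ≤ (ylh + z - ystar) / Δt := by linarith
    have h3' := mul_le_of_le_div hΔt h2'
    have h4' : Δt * (-(B - T)) = -(Δt * (B - T)) := by ring
    linarith

lemma double_to_prime {K : ℕ} {Δt : ℝ} (hΔt : 0 < Δt) (hK : 0 < K)
    {W g Wh gh : ℕ} (hW : 0 < W) (hWh : 0 < Wh)
    {γ γh : ℝ} (hγ : γ = g * Δt) (hγh : γh = gh * Δt)
    {ηp ηm : ℝ} {d ybarp ybarm : Fin K → ℝ} {ylo yhi yl0 yu0 ylh yuh ystar : ℝ}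
    {p : (Fin K → ℝ) × (Fin K → ℝ)} {m : Fin K → ℝ} {z : ℝ}
    {lp lm tp tm : Fin K → ℝ} {Lp Lm Tp Tm : Fin K → Fin K → ℝ}
    (hfeas : RdoubleFeasible Δt ηp ηm γ γh W Wh d ybarp ybarm ylo yhi yl0 yu0 ylh yuh ystar
      p m z lp lm tp tm Lp Lm Tp Tm) :
    RprimeFeasible Δt ηp ηm W g Wh gh d ybarp ybarm ylo yhi yl0 yu0 ylh yuh ystar p m z := by
  obtain ⟨hn1, hn2, h1, h2, hyu, hyl, hrU, hrL, hhU, hhL, hcU, hcL, hchU, hchL⟩ := hfeas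
  refine ⟨h1, h2, ?_, ?_, ?_, ?_⟩
  · -- upper rows
    intro δ hδ k hk
    match k, hk with
    | 0, _ =>
      rw [filter_lt_zero]
      simpa using hyu
    | (kr + 1), hk =>
      have hkr : kr < K := by omega
      set kk : Fin K := ⟨kr, hkr⟩ with hkk
      have hobj : (∑ l ∈ Finset.univ.filter (fun l : Fin K => (l : ℕ) ≤ (kk : ℕ)), Lp kk l)
          + (g : ℝ) * (∑ i ∈ Finset.univ.filter (fun i : Fin K => (i : ℕ) ≤ (kk : ℕ)), Tp kk i)
          ≤ (yhi - yu0) / Δt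
            - ∑ l ∈ Finset.univ.filter (fun l : Fin K => (l : ℕ) ≤ (kk : ℕ)),
                (ηp * p.1 l - d l) := by
        have hx := hrU kk
        rw [hγ, sum_split3] at hx
        have := le_div_of_mul_le hΔt hx
        linarith
      have hprim := window_primal hW (kk : ℕ) kk.isLt (fun l => ηp * p.2 l) _
        (Lp kk) (Tp kk) (fun l => (hn2 kk l).1) (fun i => (hn2 kk i).2.2.1)
        (fun l hl => hcU kk l hl) hobj δ hδ
      have hgoal : ∑ l ∈ Finset.univ.filter (fun l : Fin K => (l : ℕ) ≤ (kk : ℕ)),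
          (ηp * p.2 l) * δ l ≤ (yhi - yu0) / Δt
            - ∑ l ∈ Finset.univ.filter (fun l : Fin K => (l : ℕ) ≤ (kk : ℕ)),
                (ηp * p.1 l - d l) := hprim
      have hkknat : (kk : ℕ) = kr := rfl
      rw [hkknat] at hgoal
      rw [filter_lt_succ, sum_split1]
      set B := ∑ l ∈ Finset.univ.filter (fun l : Fin K => (l : ℕ) ≤ kr),
          (ηp * p.1 l - d l) with hB
      set S := ∑ l ∈ Finset.univ.filter (fun l : Fin K => (l : ℕ) ≤ kr),
          (ηp * p.2 l) * δ l with hS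
      have := mul_le_of_le_div hΔt (show B + S ≤ (yhi - yu0) / Δt by linarith)
      linarith
  · -- lower rows
    intro δ hδ k hk
    match k, hk with
    | 0, _ =>
      rw [filter_lt_zero]
      simpa using hyl
    | (kr + 1), hk =>
      have hkr : kr < K := by omega
      set kk : Fin K := ⟨kr, hkr⟩ with hkk
      have hobj : (∑ l ∈ Finset.univ.filter (fun l : Fin K => (l : ℕ) ≤ (kk : ℕ)), Lm kk l)
          + (g : ℝ) * (∑ i ∈ Finset.univ.filter (fun i : Fin K => (i : ℕ) ≤ (kk : ℕ)), Tm kk i)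
          ≤ (∑ l ∈ Finset.univ.filter (fun l : Fin K => (l : ℕ) ≤ (kk : ℕ)),
              (ηp * p.1 l - d l)) - (ylo - yl0) / Δt := by
        have hx := hrL kk
        rw [hγ, sum_split4] at hx
        set B := ∑ l ∈ Finset.univ.filter (fun l : Fin K => (l : ℕ) ≤ (kk : ℕ)),
            (ηp * p.1 l - d l) with hB
        set T := (∑ l ∈ Finset.univ.filter (fun l : Fin K => (l : ℕ) ≤ (kk : ℕ)), Lm kk l)
            + (g : ℝ) * ∑ i ∈ Finset.univ.filter (fun i : Fin K => (i : ℕ) ≤ (kk : ℕ)),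
              Tm kk i with hT
        have hmul : Δt * (-(B - T)) ≤ yl0 - ylo := by
          have hring : Δt * (-(B - T)) = -(Δt * (B - T)) := by ring
          linarith
        have hdiv := le_div_of_mul_le hΔt hmul
        have hq : (yl0 - ylo) / Δt = -((ylo - yl0) / Δt) := by ring
        linarith
      have hprim := window_primal hW (kk : ℕ) kk.isLt m _
        (Lm kk) (Tm kk) (fun l => (hn2 kk l).2.1) (fun i => (hn2 kk i).2.2.2)
        (fun l hl => hcL kk l hl) hobj δ hδ
      have hkknat : (kk : ℕ) = kr := rfl
      rw [hkknat] at hprim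
      rw [filter_lt_succ, sum_split2]
      set B := ∑ l ∈ Finset.univ.filter (fun l : Fin K => (l : ℕ) ≤ kr),
          (ηp * p.1 l - d l) with hB
      set S := ∑ l ∈ Finset.univ.filter (fun l : Fin K => (l : ℕ) ≤ kr), m l * δ l with hS
      have h2' : -(B - S) ≤ (yl0 - ylo) / Δt := by
        have hq : (yl0 - ylo) / Δt = -((ylo - yl0) / Δt) := by ring
        linarith
      have h3' := mul_le_of_le_div hΔt h2'
      have h4' : Δt * (-(B - S)) = -(Δt * (B - S)) := by ring
      linarith
  · -- hat upper
    intro δ hδ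
    have hlastlt : K - 1 < K := by omega
    have hobj : (∑ l ∈ Finset.univ.filter (fun l : Fin K => (l : ℕ) ≤ K - 1), lp l)
        + (gh : ℝ) * (∑ i ∈ Finset.univ.filter (fun i : Fin K => (i : ℕ) ≤ K - 1), tp i)
        ≤ (ystar - yuh + z) / Δt - ∑ l, (ηp * p.1 l - d l) := by
      rw [filter_le_last]
      rw [hγh, sum_split3] at hhU
      have := le_div_of_mul_le hΔt hhU
      linarith
    have hprim := window_primal hWh (K - 1) hlastlt (fun l => ηp * p.2 l) _
      lp tp (fun l => (hn1 l).1) (fun i => (hn1 i).2.2.1)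
      (fun l _ => hchU l) hobj δ hδ
    rw [filter_le_last] at hprim
    have hgoal : ∑ l, (ηp * p.2 l) * δ l
        ≤ (ystar - yuh + z) / Δt - ∑ l, (ηp * p.1 l - d l) := hprim
    rw [sum_split1]
    set B := ∑ l, (ηp * p.1 l - d l) with hB
    set S := ∑ l, (ηp * p.2 l) * δ l with hS
    have := mul_le_of_le_div hΔt (show B + S ≤ (ystar - yuh + z) / Δt by linarith)
    linarith
  · -- hat lower
    intro δ hδ
    have hlastlt : K - 1 < K := by omega
    have hobj : (∑ l ∈ Finset.univ.filter (fun l : Fin K => (l : ℕ) ≤ K - 1), lm l)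
        + (gh : ℝ) * (∑ i ∈ Finset.univ.filter (fun i : Fin K => (i : ℕ) ≤ K - 1), tm i)
        ≤ (∑ l, (ηp * p.1 l - d l)) - (ystar - ylh - z) / Δt := by
      rw [filter_le_last]
      rw [hγh, sum_split4] at hhL
      set B := ∑ l, (ηp * p.1 l - d l) with hB
      set T := (∑ l, lm l) + (gh : ℝ) * ∑ l, tm l with hT
      have hmul : Δt * (-(B - T)) ≤ ylh + z - ystar := by
        have hring : Δt * (-(B - T)) = -(Δt * (B - T)) := by ring
        linarith
      have hdiv := le_div_of_mul_le hΔt hmul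
      have hq : (ylh + z - ystar) / Δt = -((ystar - ylh - z) / Δt) := by ring
      linarith
    have hprim := window_primal hWh (K - 1) hlastlt m _
      lm tm (fun l => (hn1 l).2.1) (fun i => (hn1 i).2.2.2)
      (fun l _ => hchL l) hobj δ hδ
    rw [filter_le_last] at hprim
    rw [sum_split2]
    set B := ∑ l, (ηp * p.1 l - d l) with hB
    set S := ∑ l, m l * δ l with hS
    have h2' : -(B - S) ≤ (ylh + z - ystar) / Δt := by
      have hq : (ylh + z - ystar) / Δt = -((ystar - ylh - z) / Δt) := by ring
      linarith
    have h3' := mul_le_of_le_div hΔt h2'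
    have h4' : Δt * (-(B - S)) = -(Δt * (B - S)) := by ring
    linarith

end AuxDuality

/-- Theorem 3, linear programming reformulation: the linear
robust problem (R'_K) and the linear program (R''_K) have the same optimal
value. -/
theorem stmt_19 (Δt : ℝ) (K W g Wh gh : ℕ) (hΔt : 0 < Δt) (hK : 0 < K)
    (hg : 0 < g) (hgW : g ≤ W) (hWK : W ≤ K)
    (hgh : 0 < gh) (hghWh : gh ≤ Wh) (hWhK : Wh ≤ K)
    (γ γh : ℝ) (hγ : γ = g * Δt) (hγh : γh = gh * Δt)
    (ηp ηm : ℝ) (hηp : ηp ∈ Ioc (0:ℝ) 1) (hηm : ηm ∈ Ioc (0:ℝ) 1)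
    (d : Fin K → ℝ) (ylo yhi : ℝ) (hy : ylo ≤ yhi)
    (yl0 yu0 : ℝ) (hy0 : yl0 ≤ yu0) (ylh yuh : ℝ) (hyh : ylh ≤ yuh)
    (ybarp ybarm : Fin K → ℝ) (hybarp : ∀ l, 0 ≤ ybarp l) (hybarm : ∀ l, 0 ≤ ybarm l)
    (ystar pstar : ℝ) (hpstar : 0 ≤ pstar)
    (XK : Set ((Fin K → ℝ) × (Fin K → ℝ)))
    (hXK : ∀ p ∈ XK, (∀ l, 0 ≤ p.1 l) ∧ (∀ l, 0 ≤ p.2 l))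
    (cK : (Fin K → ℝ) × (Fin K → ℝ) → ℝ) (hcK : IsLinearMap ℝ cK) :
    sInf {v : ℝ | ∃ p ∈ XK, ∃ m : Fin K → ℝ, ∃ z : ℝ,
        RprimeFeasible Δt ηp ηm W g Wh gh d ybarp ybarm
          ylo yhi yl0 yu0 ylh yuh ystar p m z ∧
        v = cK p + pstar * z} =
      sInf {v : ℝ | ∃ p ∈ XK, ∃ m : Fin K → ℝ, ∃ z : ℝ,
        ∃ lp lm tp tm : Fin K → ℝ, ∃ Lp Lm Tp Tm : Fin K → Fin K → ℝ,
        RdoubleFeasible Δt ηp ηm γ γh W Wh d ybarp ybarm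
          ylo yhi yl0 yu0 ylh yuh ystar p m z lp lm tp tm Lp Lm Tp Tm ∧
        v = cK p + pstar * z} := by
  have hW : 0 < W := lt_of_lt_of_le hg hgW
  have hWh : 0 < Wh := lt_of_lt_of_le hgh hghWh
  apply congrArg sInf
  ext v
  simp only [mem_setOf_eq]
  constructor
  · rintro ⟨p, hp, m, z, hfeas, rfl⟩
    obtain ⟨lp, lm, tp, tm, Lp, Lm, Tp, Tm, hd⟩ :=
      prime_to_double hΔt hK hW hWh hγ hγh hfeas
    exact ⟨p, hp, m, z, lp, lm, tp, tm, Lp, Lm, Tp, Tm, hd, rfl⟩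
  · rintro ⟨p, hp, m, z, lp, lm, tp, tm, Lp, Lm, Tp, Tm, hd, rfl⟩
    exact ⟨p, hp, m, z, double_to_prime hΔt hK hW hWh hγ hγh hd, rfl⟩
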